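/- Let E be an n1×n2 real matrix, F an n1×n3 real matrix, and G an n3×n3 real symmetric positive semidefinite matrix. Then E Eᵀ ⪯ F G Fᵀ (in the Loewner order) if and only if there exists an n3×n2 real matrix D such that E = F D and D Dᵀ ⪯ G. -/

import Mathlib

open Matrix


lemma aux_dot_nonneg {n : Type*} [Fintype n] (v : n → ℝ) : 0 ≤ v ⬝ᵥ v :=
  Finset.sum_nonneg fun _ _ => mul_self_nonneg _

lemma aux_CS {n : Type*} [Fintype n] (v w : n → ℝ) :
    (v ⬝ᵥ w) ^ 2 ≤ (v ⬝ᵥ v) * (w ⬝ᵥ w) := by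
  have := Finset.sum_mul_sq_le_sq_mul_sq Finset.univ v w
  simpa [dotProduct, pow_two] using this

lemma aux_flip {m n : Type*} [Fintype m] [Fintype n] [DecidableEq m] [DecidableEq n]
    (X : Matrix m n ℝ) (h : (1 - X * Xᵀ).PosSemidef) : (1 - Xᵀ * X).PosSemidef := by
  refine posSemidef_iff_dotProduct_mulVec.mpr ⟨?_, ?_⟩
  · simp [Matrix.IsHermitian, conjTranspose_sub, conjTranspose_mul,
      conjTranspose_eq_transpose_of_trivial]
  · intro x
    have hx : star x = x := by simp
    rw [hx, sub_mulVec, one_mulVec, dotProduct_sub]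
    have hquad : x ⬝ᵥ (Xᵀ * X) *ᵥ x = (X *ᵥ x) ⬝ᵥ (X *ᵥ x) := by
      rw [← mulVec_mulVec, dotProduct_mulVec, ← mulVec_transpose, transpose_transpose,
        dotProduct_comm]
    rw [hquad]
    set z := X *ᵥ x with hz
    have h2 := h.dotProduct_mulVec_nonneg z
    rw [show star z = z by simp, sub_mulVec, one_mulVec, dotProduct_sub] at h2
    have e2 : z ⬝ᵥ (X * Xᵀ) *ᵥ z = (Xᵀ *ᵥ z) ⬝ᵥ (Xᵀ *ᵥ z) := by
      rw [← mulVec_mulVec, dotProduct_mulVec, ← mulVec_transpose]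
    rw [e2] at h2
    have hza : z ⬝ᵥ z = (Xᵀ *ᵥ z) ⬝ᵥ x := by
      rw [hz]
      conv_lhs => rw [dotProduct_mulVec, ← mulVec_transpose]
    have key : (z ⬝ᵥ z) ^ 2 ≤ (z ⬝ᵥ z) * (x ⬝ᵥ x) :=
      calc (z ⬝ᵥ z) ^ 2 = ((Xᵀ *ᵥ z) ⬝ᵥ x) ^ 2 := by rw [hza]
        _ ≤ ((Xᵀ *ᵥ z) ⬝ᵥ (Xᵀ *ᵥ z)) * (x ⬝ᵥ x) := aux_CS _ _
        _ ≤ (z ⬝ᵥ z) * (x ⬝ᵥ x) :=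
            mul_le_mul_of_nonneg_right (by linarith) (aux_dot_nonneg x)
    rcases eq_or_lt_of_le (aux_dot_nonneg z) with h0 | h0
    · rw [← h0]; simpa using aux_dot_nonneg x
    · nlinarith [key]

lemma aux_ker {m p : Type*} [Fintype m] [Fintype p] (M : Matrix m m ℝ)
    (E : Matrix m p ℝ) (h : (M - E * Eᵀ).PosSemidef) (z : m → ℝ) (hz : M *ᵥ z = 0) :
    Eᵀ *ᵥ z = 0 := by
  have h2 := h.dotProduct_mulVec_nonneg z
  rw [show star z = z by simp, sub_mulVec, hz, dotProduct_sub, dotProduct_zero] at h2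
  have e2 : z ⬝ᵥ (E * Eᵀ) *ᵥ z = (Eᵀ *ᵥ z) ⬝ᵥ (Eᵀ *ᵥ z) := by
    rw [← mulVec_mulVec, dotProduct_mulVec, ← mulVec_transpose]
  rw [e2] at h2
  exact dotProduct_self_eq_zero.mp (le_antisymm (by linarith) (aux_dot_nonneg (Eᵀ *ᵥ z)))

lemma aux_triple {k : Type*} [Fintype k] [DecidableEq k] (U : Matrix k k ℝ)
    (hU : star U * U = 1) (D1 D2 : Matrix k k ℝ) :
    (U * D1 * star U) * (U * D2 * star U) = U * (D1 * D2) * star U := by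
  have h : star U * (U * (D2 * star U)) = D2 * star U := by
    rw [← Matrix.mul_assoc, hU, Matrix.one_mul]
  simp only [Matrix.mul_assoc, h]

lemma aux_zero_of_mulVec {m n : Type*} [Fintype m] [Fintype n] [DecidableEq n]
    (A : Matrix m n ℝ) (h : ∀ z, A *ᵥ z = 0) : A = 0 := by
  ext i j
  have := congrFun (h (Pi.single j 1)) i
  simpa [mulVec_single] using this

lemma douglas {n1 n2 n3 : ℕ} (B : Matrix (Fin n1) (Fin n3) ℝ)
    (E : Matrix (Fin n1) (Fin n2) ℝ) (h : (B * Bᵀ - E * Eᵀ).PosSemidef) :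
    ∃ C : Matrix (Fin n3) (Fin n2) ℝ, E = B * C ∧ (1 - C * Cᵀ).PosSemidef := by
  have hM : (B * Bᵀ).PosSemidef := by
    have := posSemidef_self_mul_conjTranspose B
    rwa [conjTranspose_eq_transpose_of_trivial] at this
  set hH := hM.1 with hHdef
  set U : Matrix (Fin n1) (Fin n1) ℝ :=
    (hH.eigenvectorUnitary : Matrix (Fin n1) (Fin n1) ℝ) with hUdef
  set μ : Fin n1 → ℝ := hH.eigenvalues with hμdef
  have hμ0 : ∀ i, 0 ≤ μ i := fun i => hM.eigenvalues_nonneg i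
  have hU1 : star U * U = 1 := mem_unitaryGroup_iff'.mp hH.eigenvectorUnitary.2
  have hU2 : U * star U = 1 := mem_unitaryGroup_iff.mp hH.eigenvectorUnitary.2
  have hspec : B * Bᵀ = U * diagonal μ * star U := by
    have := hH.spectral_theorem
    simpa [RCLike.ofReal_real_eq_id] using this
  have hdeq : ∀ d1 d2 : Fin n1 → ℝ, d1 = d2 →
      U * diagonal d1 * star U = U * diagonal d2 * star U := fun _ _ hd => by rw [hd]
  set g0 : ℝ → ℝ := fun t => if t = 0 then 0 else t⁻¹ with hg0
  set s0 : ℝ → ℝ := fun t => if t = 0 then 0 else (Real.sqrt t)⁻¹ with hs0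
  set c0 : ℝ → ℝ := fun t => if t = 0 then 0 else 1 with hc0
  set N : Matrix (Fin n1) (Fin n1) ℝ := U * diagonal (g0 ∘ μ) * star U with hN
  set S : Matrix (Fin n1) (Fin n1) ℝ := U * diagonal (s0 ∘ μ) * star U with hS
  set P : Matrix (Fin n1) (Fin n1) ℝ := U * diagonal (c0 ∘ μ) * star U with hP
  have hstarU : star U = Uᵀ := by
    rw [star_eq_conjTranspose, conjTranspose_eq_transpose_of_trivial]
  have hTsym : ∀ f : ℝ → ℝ, (U * diagonal (f ∘ μ) * star U)ᵀ = U * diagonal (f ∘ μ) * star U := by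
    intro f
    rw [hstarU, transpose_mul, transpose_mul, transpose_transpose, diagonal_transpose,
      Matrix.mul_assoc]
  have hMN : (B * Bᵀ) * N = P := by
    rw [hspec, hN, aux_triple U hU1, diagonal_mul_diagonal, hP]
    apply hdeq
    funext i
    simp only [Pi.mul_apply, Function.comp_apply, hg0, hc0]
    by_cases hi : μ i = 0
    · simp [hi]
    · simp only [if_neg hi]; rw [mul_inv_cancel₀ hi]
  have hMP : (B * Bᵀ) * P = B * Bᵀ := by
    rw [hspec, hP, aux_triple U hU1, diagonal_mul_diagonal]
    apply hdeq
    funext i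
    simp only [Pi.mul_apply, Function.comp_apply, hc0]
    by_cases hi : μ i = 0 <;> simp [hi]
  have hSS : S * S = N := by
    rw [hS, aux_triple U hU1, diagonal_mul_diagonal, hN]
    apply hdeq
    funext i
    simp only [Pi.mul_apply, Function.comp_apply, hs0, hg0]
    by_cases hi : μ i = 0
    · simp [hi]
    · simp only [if_neg hi]; rw [← mul_inv, Real.mul_self_sqrt (hμ0 i)]
  have hSMS : S * (B * Bᵀ) * S = P := by
    rw [hspec, hS, Matrix.mul_assoc S, aux_triple U hU1, aux_triple U hU1,
      diagonal_mul_diagonal, diagonal_mul_diagonal, hP]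
    apply hdeq
    funext i
    simp only [Pi.mul_apply, Function.comp_apply, hs0, hc0]
    by_cases hi : μ i = 0
    · simp [hi]
    · simp only [if_neg hi]
      rw [show (Real.sqrt (μ i))⁻¹ * (μ i * (Real.sqrt (μ i))⁻¹)
          = μ i * ((Real.sqrt (μ i))⁻¹ * (Real.sqrt (μ i))⁻¹) from by ring,
        ← mul_inv, Real.mul_self_sqrt (hμ0 i), mul_inv_cancel₀ hi]
  have hNMN : N * (B * Bᵀ) * N = N := by
    rw [hspec, hN, Matrix.mul_assoc N, aux_triple U hU1, aux_triple U hU1,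
      diagonal_mul_diagonal, diagonal_mul_diagonal]
    apply hdeq
    funext i
    simp only [Pi.mul_apply, Function.comp_apply, hg0]
    by_cases hi : μ i = 0
    · simp [hi]
    · simp only [if_neg hi]
      exact inv_mul_cancel_left₀ hi _
  have h1P : (1 - P).PosSemidef := by
    have hdiag : (diagonal ((fun t => 1 - c0 t) ∘ μ)).PosSemidef := by
      apply PosSemidef.diagonal
      intro i
      by_cases hi : μ i = 0 <;> simp [hc0, hi]
    have := hdiag.mul_mul_conjTranspose_same U
    rw [conjTranspose_eq_transpose_of_trivial, ← hstarU] at this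
    convert this using 1
    have hd : (diagonal ((fun t => 1 - c0 t) ∘ μ)) = 1 - diagonal (c0 ∘ μ) := by
      rw [← diagonal_one, diagonal_sub]
      rfl
    rw [hd, Matrix.mul_sub, Matrix.sub_mul, Matrix.mul_one, hU2, hP]
  have hMP0 : (B * Bᵀ) * (1 - P) = 0 := by
    rw [Matrix.mul_sub, Matrix.mul_one, hMP, sub_self]
  have hEP : Eᵀ * (1 - P) = 0 := by
    apply aux_zero_of_mulVec
    intro z
    rw [← mulVec_mulVec]
    apply aux_ker _ _ h
    rw [mulVec_mulVec, hMP0, zero_mulVec]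
  have hPE : P * E = E := by
    have h' := congrArg Matrix.transpose hEP
    rw [transpose_mul, transpose_zero, transpose_sub, transpose_one, hTsym, transpose_transpose,
      Matrix.sub_mul, Matrix.one_mul, sub_eq_zero] at h'
    exact h'.symm
  refine ⟨Bᵀ * N * E, ?_, ?_⟩
  · rw [show B * (Bᵀ * N * E) = ((B * Bᵀ) * N) * E by simp only [Matrix.mul_assoc], hMN, hPE]
  · set C := Bᵀ * N * E with hC
    have hNsym : Nᵀ = N := hTsym g0
    have hSsym : Sᵀ = S := hTsym s0
    have hCC : Cᵀ * C = (S * E)ᵀ * (S * E) := by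
      have e1 : Cᵀ * C = Eᵀ * (N * (B * Bᵀ) * N) * E := by
        rw [hC]
        simp only [transpose_mul, transpose_transpose, hNsym, Matrix.mul_assoc]
      have e2 : (S * E)ᵀ * (S * E) = Eᵀ * (S * S) * E := by
        simp only [transpose_mul, hSsym, Matrix.mul_assoc]
      rw [e1, hNMN, e2, hSS]
    have hXX : (1 - (S * E) * (S * E)ᵀ).PosSemidef := by
      have hpart : (S * (B * Bᵀ - E * Eᵀ) * S).PosSemidef := by
        have := h.mul_mul_conjTranspose_same S
        rwa [conjTranspose_eq_transpose_of_trivial, hSsym] at this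
      have heq : 1 - (S * E) * (S * E)ᵀ = (1 - P) + S * (B * Bᵀ - E * Eᵀ) * S := by
        rw [transpose_mul, hSsym, Matrix.mul_sub, Matrix.sub_mul, hSMS]
        simp only [Matrix.mul_assoc]
        abel
      rw [heq]
      exact h1P.add hpart
    have h2 : (1 - Cᵀ * C).PosSemidef := by
      rw [hCC]
      exact aux_flip _ (by simpa using hXX)
    have h3 : (1 - Cᵀ * Cᵀᵀ).PosSemidef := by rwa [transpose_transpose]
    have h4 := aux_flip Cᵀ h3
    rwa [transpose_transpose] at h4

theorem stmt0 (n1 n2 n3 : ℕ)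
    (E : Matrix (Fin n1) (Fin n2) ℝ) (F : Matrix (Fin n1) (Fin n3) ℝ)
    (G : Matrix (Fin n3) (Fin n3) ℝ) (hG : G.PosSemidef) :
    (F * G * Fᵀ - E * Eᵀ).PosSemidef ↔
      ∃ D : Matrix (Fin n3) (Fin n2) ℝ, E = F * D ∧ (G - D * Dᵀ).PosSemidef := by
  constructor
  · intro h
    open scoped MatrixOrder in
    set R := CFC.sqrt G with hR
    have hRsym : Rᵀ = R := by
      rw [← conjTranspose_eq_transpose_of_trivial]
      open scoped MatrixOrder in
      exact (CFC.sqrt_nonneg G).posSemidef.1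
    have hRR : R * R = G := by
      open scoped MatrixOrder in
      exact CFC.sqrt_mul_sqrt_self G hG.nonneg
    have hBB : (F * R) * (F * R)ᵀ = F * G * Fᵀ := by
      rw [transpose_mul, hRsym, show F * R * (R * Fᵀ) = F * (R * R) * Fᵀ from by
        simp only [Matrix.mul_assoc], hRR]
    obtain ⟨C, hEC, hCC⟩ := douglas (F * R) E (by rwa [hBB])
    refine ⟨R * C, by rw [hEC, Matrix.mul_assoc], ?_⟩
    have heq : G - (R * C) * (R * C)ᵀ = R * (1 - C * Cᵀ) * Rᵀ := by
      rw [transpose_mul, Matrix.mul_sub, Matrix.sub_mul, Matrix.mul_one, hRsym, hRR]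
      simp only [Matrix.mul_assoc]
    rw [heq]
    have h5 := hCC.mul_mul_conjTranspose_same R
    rwa [conjTranspose_eq_transpose_of_trivial] at h5
  · rintro ⟨D, rfl, hD⟩
    have heq : F * G * Fᵀ - (F * D) * (F * D)ᵀ = F * (G - D * Dᵀ) * Fᵀ := by
      rw [transpose_mul, Matrix.mul_sub, Matrix.sub_mul]
      simp only [Matrix.mul_assoc]
    rw [heq]
    have h5 := hD.mul_mul_conjTranspose_same F
    rwa [conjTranspose_eq_transpose_of_trivial] at h5
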